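/- For real x with 0 < x ≤ 1, the inequality log((1 + √(1−x²))/x) − √(1 − x²) ≥ (1/3)(2 − 2x)^{3/2} holds. -/

import Mathlib

open Real Set

private lemma g_deriv (t : ℝ) (ht0 : 0 < t) (ht1 : t < 1) :
    HasDerivAt (fun y : ℝ => Real.log (1 + Real.sqrt (1 - y ^ 2)) - Real.log y
        - Real.sqrt (1 - y ^ 2) - (1 / 3) * (2 - 2 * y) ^ ((3 : ℝ) / 2))
      ((-(2 * t) / (2 * Real.sqrt (1 - t ^ 2))) / (1 + Real.sqrt (1 - t ^ 2)) - t⁻¹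
        - (-(2 * t) / (2 * Real.sqrt (1 - t ^ 2)))
        - (1 / 3) * (((3 : ℝ) / 2 * (2 - 2 * t) ^ ((3 : ℝ) / 2 - 1)) * (-2))) t := by
  have h1t : 0 < 1 - t ^ 2 := by nlinarith
  have hs : 0 < Real.sqrt (1 - t ^ 2) := Real.sqrt_pos.mpr h1t
  have hin : HasDerivAt (fun y : ℝ => 1 - y ^ 2) (-(2 * t)) t := by
    simpa using (hasDerivAt_pow 2 t).const_sub 1
  have hsq : HasDerivAt (fun y : ℝ => Real.sqrt (1 - y ^ 2))
      (-(2 * t) / (2 * Real.sqrt (1 - t ^ 2))) t := hin.sqrt (ne_of_gt h1t)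
  have hlog1 : HasDerivAt (fun y : ℝ => Real.log (1 + Real.sqrt (1 - y ^ 2)))
      ((-(2 * t) / (2 * Real.sqrt (1 - t ^ 2))) / (1 + Real.sqrt (1 - t ^ 2))) t :=
    (hsq.const_add 1).log (by positivity)
  have hlogt : HasDerivAt Real.log t⁻¹ t := Real.hasDerivAt_log (ne_of_gt ht0)
  have hlin : HasDerivAt (fun y : ℝ => 2 - 2 * y) (-2) t := by
    simpa using (hasDerivAt_id t).const_mul (2 : ℝ) |>.const_sub 2
  have hrpow : HasDerivAt (fun y : ℝ => (2 - 2 * y) ^ ((3 : ℝ) / 2))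
      (((3 : ℝ) / 2 * (2 - 2 * t) ^ ((3 : ℝ) / 2 - 1)) * (-2)) t := by
    have h := (Real.hasDerivAt_rpow_const (x := 2 - 2 * t) (p := (3 : ℝ) / 2)
      (Or.inl (by nlinarith))).comp t hlin
    simpa [Function.comp_def] using h
  exact ((hlog1.sub hlogt).sub hsq).sub (hrpow.const_mul (1 / 3))

private lemma g_deriv_nonpos (t : ℝ) (ht0 : 0 < t) (ht1 : t < 1) :
    ((-(2 * t) / (2 * Real.sqrt (1 - t ^ 2))) / (1 + Real.sqrt (1 - t ^ 2)) - t⁻¹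
        - (-(2 * t) / (2 * Real.sqrt (1 - t ^ 2)))
        - (1 / 3) * (((3 : ℝ) / 2 * (2 - 2 * t) ^ ((3 : ℝ) / 2 - 1)) * (-2))) ≤ 0 := by
  have h1t : 0 < 1 - t ^ 2 := by nlinarith
  set s := Real.sqrt (1 - t ^ 2) with hsdef
  have hs : 0 < s := Real.sqrt_pos.mpr h1t
  have hs2 : s ^ 2 = 1 - t ^ 2 := Real.sq_sqrt h1t.le
  have hexp : (2 - 2 * t) ^ ((3 : ℝ) / 2 - 1) = Real.sqrt (2 - 2 * t) := by
    rw [show (3 : ℝ) / 2 - 1 = 1 / 2 by norm_num]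
    exact (Real.sqrt_eq_rpow _).symm
  rw [hexp]
  set u := Real.sqrt (2 - 2 * t) with hudef
  have hu : 0 ≤ u := Real.sqrt_nonneg _
  have hu2 : u ^ 2 = 2 - 2 * t := Real.sq_sqrt (by linarith)
  have hkey : u * t ≤ s := by
    nlinarith [sq_nonneg (s - u * t), sq_nonneg (1 - t)]
  have h1s : 0 < 1 + s := by linarith
  have hE : -(2*t)/(2*s)/(1+s) - t⁻¹ - (-(2*t)/(2*s)) - 1/3*(3/2*u*(-2)) = (u*t - s)/t := by
    field_simp
    ring_nf
    linear_combination s * hs2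
  rw [show (-(2 * t) / (2 * s) / (1 + s) - t⁻¹ - -(2 * t) / (2 * s)
      - 1 / 3 * (3 / 2 * u * -2)) = -(2*t)/(2*s)/(1+s) - t⁻¹ - (-(2*t)/(2*s)) - 1/3*(3/2*u*(-2)) by ring, hE]
  exact div_nonpos_of_nonpos_of_nonneg (by linarith) ht0.le

theorem stmt_11 (x : ℝ) (hx0 : 0 < x) (hx1 : x ≤ 1) :
    (1 / 3) * (2 - 2 * x) ^ ((3 : ℝ) / 2)
      ≤ Real.log ((1 + Real.sqrt (1 - x ^ 2)) / x) - Real.sqrt (1 - x ^ 2) := by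
  set g : ℝ → ℝ := fun y => Real.log (1 + Real.sqrt (1 - y ^ 2)) - Real.log y
      - Real.sqrt (1 - y ^ 2) - (1 / 3) * (2 - 2 * y) ^ ((3 : ℝ) / 2) with hg
  have hanti : AntitoneOn g (Icc x 1) := by
    apply antitoneOn_of_deriv_nonpos (convex_Icc x 1)
    · -- continuity
      apply ContinuousOn.sub
      apply ContinuousOn.sub
      apply ContinuousOn.sub
      · apply ContinuousOn.log
        · exact (continuous_const.add ((continuous_const.sub (continuous_pow 2)).sqrt)).continuousOn
        · intro y hy
          have := Real.sqrt_nonneg (1 - y ^ 2)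
          positivity
      · exact Real.continuousOn_log.mono (fun y hy => by
          simp only [mem_compl_iff, mem_singleton_iff]
          exact ne_of_gt (lt_of_lt_of_le hx0 hy.1))
      · exact ((continuous_const.sub (continuous_pow 2)).sqrt).continuousOn
      · exact continuousOn_const.mul
          ((continuous_const.sub (continuous_const.mul continuous_id)).continuousOn.rpow_const
            (fun y hy => Or.inr (by norm_num)))
    · rw [interior_Icc]
      intro t ht
      exact (g_deriv t (lt_trans hx0 ht.1) ht.2).differentiableAt.differentiableWithinAt
    · rw [interior_Icc]
      intro t ht
      rw [(g_deriv t (lt_trans hx0 ht.1) ht.2).deriv]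
      exact g_deriv_nonpos t (lt_trans hx0 ht.1) ht.2
  have h1 : g 1 ≤ g x := hanti (left_mem_Icc.mpr hx1) (right_mem_Icc.mpr hx1) hx1
  have hg1 : g 1 = 0 := by
    simp [hg, Real.zero_rpow (by norm_num : ((3:ℝ)/2) ≠ 0)]
  have hlogdiv : Real.log ((1 + Real.sqrt (1 - x ^ 2)) / x)
      = Real.log (1 + Real.sqrt (1 - x ^ 2)) - Real.log x := by
    have := Real.sqrt_nonneg (1 - x ^ 2)
    rw [Real.log_div (by positivity) (ne_of_gt hx0)]
  rw [hlogdiv]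
  have := hg1 ▸ h1
  simp only [hg] at this
  linarith
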